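/- Define genus-labelled graphs inductively: 1 is a graph of genus 0 and order 0, and from graphs t₁ (genus g₁, order n₁) and t₂ (genus g₂, order n₂) one forms t₁ ∨ t₂ of genus g₁+g₂ and order n₁+n₂+1, and t₁ ⌒ t₂ (bridge) of genus g₁+g₂+1 and order n₁+n₂+1. Define ∗_h on the free k-module on such graphs by t ∗_h 1 = 1 ∗_h t = t and the four-case recursion: (a∘b) ∗_h (c∘'d) = (a∘b ∗_h c) ∘' d + a ∘ (b ∗_h (c∘'d)), where ∘,∘' each independently stand for ∨ or ⌒ and the first summand uses the connective ∘' of the right factor on its outer decomposition while the second summand uses the connective ∘ of the left factor. Then ∗_h is associative. -/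

import Mathlib

/-- Genus-labelled graphs: `one` is the trivial graph `1 = |`, `vee` is grafting `∨`,
and `br` is the bridge operation `⌒` (which creates a loop). -/
inductive G where
  | one : G
  | vee : G → G → G
  | br : G → G → G
deriving DecidableEq

namespace G

/-- The order of a graph: the number of internal vertices of the underlying tree. -/
def order : G → ℕ
  | one => 0
  | vee a b => order a + order b + 1
  | br a b => order a + order b + 1

/-- The genus (loop number) of a graph. -/
def genus : G → ℕ
  | one => 0
  | vee a b => genus a + genus b
  | br a b => genus a + genus b + 1

/-- The number of free (uncontracted) leaves of a graph. -/
def freeLeaves : G → ℕ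
  | one => 1
  | vee a b => freeLeaves a + freeLeaves b
  | br a b => freeLeaves a + freeLeaves b - 2

/-- A graph is regular when every bridge genuinely contracts two free leaves;
irregular graphs are those in which some leaf is involved in more than one loop
contraction. -/
def Regular : G → Prop
  | one => True
  | vee a b => Regular a ∧ Regular b
  | br a b => Regular a ∧ Regular b ∧ 1 ≤ freeLeaves a ∧ 1 ≤ freeLeaves b

end G

/-- The quantized product `∗_h` on basis graphs, with values in the free `k`-module
`k[Y^∞]_h`: `t ∗_h 1 = 1 ∗_h t = t` and
`(t₁∘t₂) ∗_h (s₁∘'s₂) = ((t₁∘t₂) ∗_h s₁) ∘' s₂ + t₁ ∘ (t₂ ∗_h (s₁∘'s₂))`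
for `∘, ∘' ∈ {∨, ⌒}`. -/
noncomputable def G.hstar (k : Type*) [CommRing k] : G → G → (G →₀ k)
  | .one, t => Finsupp.single t 1
  | .vee a b, .one => Finsupp.single (.vee a b) 1
  | .br a b, .one => Finsupp.single (.br a b) 1
  | .vee a b, .vee c d =>
      Finsupp.mapDomain (fun u => G.vee u d) (G.hstar k (.vee a b) c)
      + Finsupp.mapDomain (fun u => G.vee a u) (G.hstar k b (.vee c d))
  | .vee a b, .br c d =>
      Finsupp.mapDomain (fun u => G.br u d) (G.hstar k (.vee a b) c)
      + Finsupp.mapDomain (fun u => G.vee a u) (G.hstar k b (.br c d))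
  | .br a b, .vee c d =>
      Finsupp.mapDomain (fun u => G.vee u d) (G.hstar k (.br a b) c)
      + Finsupp.mapDomain (fun u => G.br a u) (G.hstar k b (.vee c d))
  | .br a b, .br c d =>
      Finsupp.mapDomain (fun u => G.br u d) (G.hstar k (.br a b) c)
      + Finsupp.mapDomain (fun u => G.br a u) (G.hstar k b (.br c d))
termination_by t s => t.order + s.order
decreasing_by all_goals simp [G.order] <;> omega

/-- The bilinear extension of `∗_h` to the free `k`-module `k[Y^∞]_h`. -/
noncomputable def G.hstarL (k : Type*) [CommRing k] (x y : G →₀ k) : G →₀ k :=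
  x.sum fun t a => y.sum fun s b => (a * b) • G.hstar k t s

/-- The one-loop graph `O = | ⌒ |`. -/
def G.O : G := G.br G.one G.one

/-- The one-vertex tree `T = | ∨ |`. -/
def G.T : G := G.vee G.one G.one

section Aux

open Finsupp

variable {k : Type*} [CommRing k]

/-- Uniform connective: `app true = vee`, `app false = br`. -/
def app : Bool → G → G → G
  | true, a, b => G.vee a b
  | false, a, b => G.br a b

lemma order_app (p : Bool) (a b : G) : (app p a b).order = a.order + b.order + 1 := by
  cases p <;> rfl

lemma eq_one_or_app (t : G) : t = G.one ∨ ∃ p a b, t = app p a b := by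
  cases t with
  | one => exact Or.inl rfl
  | vee a b => exact Or.inr ⟨true, a, b, rfl⟩
  | br a b => exact Or.inr ⟨false, a, b, rfl⟩

lemma hstar_one_left (t : G) : G.hstar k G.one t = Finsupp.single t 1 := by
  rw [G.hstar]

lemma hstar_one_right (t : G) : G.hstar k t G.one = Finsupp.single t 1 := by
  cases t <;> rw [G.hstar]

lemma hstar_app (p q : Bool) (a b c d : G) :
    G.hstar k (app p a b) (app q c d)
      = Finsupp.mapDomain (fun u => app q u d) (G.hstar k (app p a b) c)
        + Finsupp.mapDomain (fun u => app p a u) (G.hstar k b (app q c d)) := by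
  cases p <;> cases q <;> simp only [app] <;> conv_lhs => rw [G.hstar]

lemma hstarL_single_left (t : G) (m : G →₀ k) :
    G.hstarL k (Finsupp.single t 1) m = m.sum fun s b => b • G.hstar k t s := by
  rw [G.hstarL, Finsupp.sum_single_index] <;> simp

lemma hstarL_single_right (u : G) (m : G →₀ k) :
    G.hstarL k m (Finsupp.single u 1) = m.sum fun t a => a • G.hstar k t u := by
  rw [G.hstarL]
  refine Finsupp.sum_congr fun t _ => ?_
  rw [Finsupp.sum_single_index] <;> simp

lemma hstarL_single_single (t s : G) :
    G.hstarL k (Finsupp.single t 1) (Finsupp.single s 1) = G.hstar k t s := by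
  rw [hstarL_single_left, Finsupp.sum_single_index] <;> simp

lemma hstarL_zero_left (y : G →₀ k) : G.hstarL k 0 y = 0 := by
  simp [G.hstarL]

lemma hstarL_zero_right (x : G →₀ k) : G.hstarL k x 0 = 0 := by
  simp [G.hstarL]

lemma hstarL_add_left (x x' y : G →₀ k) :
    G.hstarL k (x + x') y = G.hstarL k x y + G.hstarL k x' y := by
  simp only [G.hstarL]
  rw [Finsupp.sum_add_index'] <;> simp [add_mul, add_smul, Finsupp.sum_add]

lemma hstarL_add_right (x y y' : G →₀ k) :
    G.hstarL k x (y + y') = G.hstarL k x y + G.hstarL k x y' := by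
  simp only [G.hstarL]
  rw [← Finsupp.sum_add]
  refine Finsupp.sum_congr fun t _ => ?_
  rw [Finsupp.sum_add_index'] <;> simp [mul_add, add_smul]

lemma hstarL_smul_left (a : k) (x y : G →₀ k) :
    G.hstarL k (a • x) y = a • G.hstarL k x y := by
  simp only [G.hstarL]
  rw [Finsupp.sum_smul_index, Finsupp.smul_sum]
  · refine Finsupp.sum_congr fun t _ => ?_
    rw [Finsupp.smul_sum]
    simp [mul_assoc, mul_smul]
  · simp

lemma hstarL_smul_right (a : k) (x y : G →₀ k) :
    G.hstarL k x (a • y) = a • G.hstarL k x y := by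
  simp only [G.hstarL]
  rw [Finsupp.smul_sum]
  refine Finsupp.sum_congr fun t c => ?_
  rw [Finsupp.sum_smul_index, Finsupp.smul_sum]
  · refine Finsupp.sum_congr fun s b => ?_
    rw [mul_left_comm, mul_smul]
  · simp

lemma mapDomain_sum_smul (g : G → G) (m : G →₀ k) (F : G → (G →₀ k)) :
    Finsupp.mapDomain g (m.sum fun v α => α • F v)
      = m.sum fun v α => α • Finsupp.mapDomain g (F v) := by
  rw [show Finsupp.mapDomain (M := k) g = ⇑(Finsupp.mapDomain.addMonoidHom g) from rfl,
    map_finsuppSum]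
  simp [Finsupp.mapDomain.addMonoidHom_apply, Finsupp.mapDomain_smul]

lemma sum_mapDomain_smul (g : G → G) (m : G →₀ k) (F : G → (G →₀ k)) :
    (Finsupp.mapDomain g m).sum (fun v α => α • F v) = m.sum fun v α => α • F (g v) :=
  Finsupp.sum_mapDomain_index (by simp) (by simp [add_smul])

lemma cross (m n : G →₀ k) (F : G → G → G) :
    (m.sum fun v α => α • Finsupp.mapDomain (fun y => F v y) n)
      = n.sum fun y γ => γ • Finsupp.mapDomain (fun v => F v y) m := by
  simp only [Finsupp.mapDomain, Finsupp.smul_sum]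
  rw [Finsupp.sum_comm]
  refine Finsupp.sum_congr fun y _ => Finsupp.sum_congr fun v _ => ?_
  simp [Finsupp.smul_single, smul_eq_mul, mul_comm]

lemma expand (p q : Bool) (a b c d u : G) :
    G.hstarL k (G.hstar k (app p a b) (app q c d)) (Finsupp.single u 1)
      = (G.hstar k (app p a b) c).sum (fun v α => α • G.hstar k (app q v d) u)
        + (G.hstar k b (app q c d)).sum (fun w β => β • G.hstar k (app p a w) u) := by
  rw [hstar_app, hstarL_add_left, hstarL_single_right, hstarL_single_right,
    sum_mapDomain_smul, sum_mapDomain_smul]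

theorem key_aux (k : Type*) [CommRing k] (n : ℕ) :
    ∀ t s u : G, t.order + s.order + u.order ≤ n →
      G.hstarL k (G.hstar k t s) (Finsupp.single u 1)
        = G.hstarL k (Finsupp.single t 1) (G.hstar k s u) := by
  induction n using Nat.strong_induction_on with
  | _ n IH =>
  intro t s u hn
  rcases eq_one_or_app t with rfl | ⟨p, a, b, rfl⟩
  · rw [hstar_one_left, hstarL_single_single, hstarL_single_left]
    simp only [hstar_one_left]
    simp [Finsupp.smul_single, Finsupp.sum_single]
  rcases eq_one_or_app s with rfl | ⟨q, c, d, rfl⟩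
  · rw [hstar_one_right, hstar_one_left]
  rcases eq_one_or_app u with rfl | ⟨r, e, f, rfl⟩
  · rw [hstarL_single_right, hstar_one_right, hstarL_single_single]
    simp only [hstar_one_right]
    simp [Finsupp.smul_single, Finsupp.sum_single]
  · simp only [order_app] at hn
    have IH1 := IH ((app p a b).order + (app q c d).order + e.order)
      (by simp only [order_app]; omega) (app p a b) (app q c d) e le_rfl
    have IH2 := IH (b.order + (app q c d).order + (app r e f).order)
      (by simp only [order_app]; omega) b (app q c d) (app r e f) le_rfl
    rw [expand p q a b c d (app r e f)]
    simp only [hstar_app q r, hstar_app p r]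
    simp only [smul_add, Finsupp.sum_add]
    rw [hstarL_add_right, hstarL_single_left, hstarL_single_left,
      sum_mapDomain_smul, sum_mapDomain_smul]
    simp only [hstar_app p r, hstar_app p q]
    simp only [smul_add, Finsupp.sum_add]
    have h13 :
        ((G.hstar k (app p a b) c).sum fun v α =>
            α • Finsupp.mapDomain (fun u => app r u f) (G.hstar k (app q v d) e))
          + ((G.hstar k b (app q c d)).sum fun w β =>
            β • Finsupp.mapDomain (fun u => app r u f) (G.hstar k (app p a w) e))
        = (G.hstar k (app q c d) e).sum fun x δ =>
            δ • Finsupp.mapDomain (fun u => app r u f) (G.hstar k (app p a b) x) := by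
      rw [← mapDomain_sum_smul, ← mapDomain_sum_smul, ← Finsupp.mapDomain_add,
        ← expand p q a b c d e, IH1, hstarL_single_left, mapDomain_sum_smul]
    have h2 :
        ((G.hstar k (app p a b) c).sum fun v α =>
            α • Finsupp.mapDomain (fun u => app q v u) (G.hstar k d (app r e f)))
        = (G.hstar k d (app r e f)).sum fun y γ =>
            γ • Finsupp.mapDomain (fun u => app q u y) (G.hstar k (app p a b) c) :=
      cross (G.hstar k (app p a b) c) (G.hstar k d (app r e f)) (fun v y => app q v y)
    have h4 :
        ((G.hstar k b (app q c d)).sum fun w β =>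
            β • Finsupp.mapDomain (fun u => app p a u) (G.hstar k w (app r e f)))
        = ((G.hstar k (app q c d) e).sum fun x δ =>
            δ • Finsupp.mapDomain (fun u => app p a u) (G.hstar k b (app r x f)))
          + ((G.hstar k d (app r e f)).sum fun y γ =>
            γ • Finsupp.mapDomain (fun u => app p a u) (G.hstar k b (app q c y))) := by
      rw [← mapDomain_sum_smul, ← hstarL_single_right, IH2, hstarL_single_left,
        hstar_app q r,
        Finsupp.sum_add_index' (fun y => by simp) (fun y γ γ' => by rw [add_smul]),
        sum_mapDomain_smul, sum_mapDomain_smul, Finsupp.mapDomain_add,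
        mapDomain_sum_smul, mapDomain_sum_smul]
    rw [h2, h4, ← h13]
    abel

theorem key (k : Type*) [CommRing k] (t s u : G) :
    G.hstarL k (G.hstar k t s) (Finsupp.single u 1)
      = G.hstarL k (Finsupp.single t 1) (G.hstar k s u) :=
  key_aux k _ t s u le_rfl

end Aux

section Aux2

variable {k : Type*} [CommRing k]

lemma assoc_single2 (t s : G) (z : G →₀ k) :
    G.hstarL k (G.hstarL k (Finsupp.single t 1) (Finsupp.single s 1)) z
      = G.hstarL k (Finsupp.single t 1) (G.hstarL k (Finsupp.single s 1) z) := by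
  induction z using Finsupp.induction with
  | zero => simp [hstarL_zero_right]
  | single_add u cc z hu hc ih =>
    rw [hstarL_add_right, hstarL_add_right, hstarL_add_right, ih]
    have hs : (Finsupp.single u cc : G →₀ k) = cc • Finsupp.single u 1 := by simp
    rw [hs, hstarL_smul_right, hstarL_smul_right, hstarL_smul_right,
      hstarL_single_single, hstarL_single_single, key]

lemma assoc_single1 (t : G) (y z : G →₀ k) :
    G.hstarL k (G.hstarL k (Finsupp.single t 1) y) z
      = G.hstarL k (Finsupp.single t 1) (G.hstarL k y z) := by
  induction y using Finsupp.induction with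
  | zero => simp [hstarL_zero_right, hstarL_zero_left]
  | single_add s bb y hs hb ih =>
    rw [hstarL_add_right, hstarL_add_left, hstarL_add_left, hstarL_add_right, ih]
    have hb' : (Finsupp.single s bb : G →₀ k) = bb • Finsupp.single s 1 := by simp
    rw [hb', hstarL_smul_right, hstarL_smul_left, hstarL_smul_left, hstarL_smul_right,
      assoc_single2]

end Aux2

/-- The quantized product `∗_h` on `k[Y^∞]_h` (defined by `t ∗_h 1 = 1 ∗_h t = t` and
`(t₁∘t₂) ∗_h (s₁∘'s₂) = ((t₁∘t₂) ∗_h s₁) ∘' s₂ + t₁ ∘ (t₂ ∗_h (s₁∘'s₂))` for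
`∘, ∘' ∈ {∨, ⌒}`, extended bilinearly) is associative. -/



theorem stmt9 (k : Type*) [CommRing k] [CharZero k] (x y z : G →₀ k) :
    G.hstarL k (G.hstarL k x y) z = G.hstarL k x (G.hstarL k y z) := by
  induction x using Finsupp.induction with
  | zero => simp [hstarL_zero_left]
  | single_add t aa x ht ha ih =>
    rw [hstarL_add_left, hstarL_add_left, hstarL_add_left, ih]
    have ha' : (Finsupp.single t aa : G →₀ k) = aa • Finsupp.single t 1 := by simp
    rw [ha', hstarL_smul_left, hstarL_smul_left, hstarL_smul_left, assoc_single1]
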